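/- Let R, C_v, τ1, τ2, κ, μ > 0 and define p(v,θ,q,S) = Rθ/v − τ1 q²/(2κθ) − τ2 S²/(2μ) and e(v,θ,q,S) = C_v θ + τ1 v q²/(κθ) + τ2 v S²/(2μ). For (v,θ,q,S) with v, θ > 0 and e_θ := ∂_θ e(v,θ,q,S) > 0, let A(v,θ,q,S) be the 5×5 real matrix with rows (0, −1, 0, 0, 0), (p_v, 0, p_θ, p_q, p_S − 1), (0, θ p_θ/e_θ, −2q/(θ e_θ), 1/e_θ, 0), (0, 0, κ/(τ1 v), 0, 0), (0, −μ/(τ2 v), 0, 0, 0), where p_v, p_θ, p_q, p_S are the partial derivatives of p, and set c₀ = √( μ(1 − p_S)/(τ2 v) − p_v ). Then there exists δ > 0 such that whenever |v−1| + |θ−1| + |q| + |S| ≤ δ, the matrix A(v,θ,q,S) has five distinct real eigenvalues λ1 < λ2 < λ3 = 0 < λ4 < λ5 satisfying λ1 < −c₀ < λ2 and λ4 < c₀ < λ5 (in particular, the system is strictly hyperbolic near the equilibrium state (v,θ,q,S) = (1,1,0,0)). -/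

import Mathlib

open Polynomial

lemma SHaux_quartic_pos (c3 c2 c1 c0 x : ℝ)
    (hx : 1 + |c3| + |c2| + |c1| + |c0| ≤ |x|) :
    0 < x^4 + c3*x^3 + c2*x^2 + c1*x + c0 := by
  have h1 : (1:ℝ) ≤ |x| := by
    have := abs_nonneg c3; have := abs_nonneg c2; have := abs_nonneg c1; have := abs_nonneg c0
    linarith
  have hxnn : (0:ℝ) ≤ |x| := by linarith
  have hx4 : |x|^4 = x^4 := by
    rw [← abs_pow]; exact abs_of_nonneg (by positivity)
  have hb3 : -(|c3| * |x|^3) ≤ c3*x^3 := by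
    have := neg_abs_le (c3*x^3)
    rwa [abs_mul, abs_pow] at this
  have hb2 : -(|c2| * |x|^2) ≤ c2*x^2 := by
    have := neg_abs_le (c2*x^2)
    rwa [abs_mul, abs_pow] at this
  have hb1 : -(|c1| * |x|) ≤ c1*x := by
    have := neg_abs_le (c1*x)
    rwa [abs_mul] at this
  have hb0 : -|c0| ≤ c0 := neg_abs_le c0
  have hp2 : |x|^2 ≤ |x|^3 := by nlinarith
  have hp1 : |x| ≤ |x|^3 := by nlinarith
  have hp0 : (1:ℝ) ≤ |x|^3 := by nlinarith
  have hkey : (1 + |c3| + |c2| + |c1| + |c0|) * |x|^3 ≤ |x| * |x|^3 :=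
    mul_le_mul_of_nonneg_right hx (by positivity)
  nlinarith [mul_le_mul_of_nonneg_left hp2 (abs_nonneg c2),
    mul_le_mul_of_nonneg_left hp1 (abs_nonneg c1),
    mul_le_mul_of_nonneg_left hp0 (abs_nonneg c0)]

lemma SHaux_root_np (f : ℝ → ℝ) (hf : Continuous f) {a b : ℝ} (hab : a < b)
    (ha : f a < 0) (hb : 0 < f b) : ∃ x, a < x ∧ x < b ∧ f x = 0 := by
  obtain ⟨x, hx, hfx⟩ := intermediate_value_Ioo hab.le hf.continuousOn ⟨ha, hb⟩
  exact ⟨x, hx.1, hx.2, hfx⟩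

lemma SHaux_root_pn (f : ℝ → ℝ) (hf : Continuous f) {a b : ℝ} (hab : a < b)
    (ha : 0 < f a) (hb : f b < 0) : ∃ x, a < x ∧ x < b ∧ f x = 0 := by
  obtain ⟨x, hx, hfx⟩ := intermediate_value_Ioo' hab.le hf.continuousOn ⟨hb, ha⟩
  exact ⟨x, hx.1, hx.2, hfx⟩

lemma SHaux_quartic_roots (c3 c2 c1 c0 r1 r2 r3 r4 : ℝ)
    (h12 : r1 < r2) (h23 : r2 < r3) (h34 : r3 < r4)
    (e1 : r1^4 + c3*r1^3 + c2*r1^2 + c1*r1 + c0 = 0)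
    (e2 : r2^4 + c3*r2^3 + c2*r2^2 + c1*r2 + c0 = 0)
    (e3 : r3^4 + c3*r3^3 + c2*r3^2 + c1*r3 + c0 = 0)
    (e4 : r4^4 + c3*r4^3 + c2*r4^2 + c1*r4 + c0 = 0) :
    (X^4 + C c3*X^3 + C c2*X^2 + C c1*X + C c0 : ℝ[X]).roots = {r1, r2, r3, r4} := by
  set Q : ℝ[X] := X^4 + C c3*X^3 + C c2*X^2 + C c1*X + C c0 with hQ
  have hdeg : Q.natDegree = 4 := by rw [hQ]; compute_degree!
  have hQ0 : Q ≠ 0 := by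
    intro h
    rw [h] at hdeg
    simp at hdeg
  have hroot : ∀ r : ℝ, r^4 + c3*r^3 + c2*r^2 + c1*r + c0 = 0 → Q.IsRoot r := by
    intro r hr
    simp only [hQ, IsRoot, eval_add, eval_mul, eval_pow, eval_C, eval_X]
    linarith
  have n12 : r1 ≠ r2 := h12.ne
  have n13 : r1 ≠ r3 := (h12.trans h23).ne
  have n14 : r1 ≠ r4 := ((h12.trans h23).trans h34).ne
  have n23 : r2 ≠ r3 := h23.ne
  have n24 : r2 ≠ r4 := (h23.trans h34).ne
  have n34 : r3 ≠ r4 := h34.ne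
  have hnodup : ({r1, r2, r3, r4} : Multiset ℝ).Nodup := by
    simp [Multiset.insert_eq_cons, Multiset.nodup_cons, n12, n13, n14, n23, n24, n34]
  have hmem : ∀ x ∈ ({r1, r2, r3, r4} : Multiset ℝ), x ∈ Q.roots := by
    intro x hx
    simp only [Multiset.insert_eq_cons, Multiset.mem_cons, Multiset.mem_singleton] at hx
    rw [Polynomial.mem_roots hQ0]
    rcases hx with h|h|h|h <;> rw [h]
    exacts [hroot r1 e1, hroot r2 e2, hroot r3 e3, hroot r4 e4]
  have hle : ({r1, r2, r3, r4} : Multiset ℝ) ≤ Q.roots := by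
    rw [Multiset.le_iff_count]
    intro x
    by_cases hx : x ∈ ({r1, r2, r3, r4} : Multiset ℝ)
    · have h1 : Multiset.count x ({r1, r2, r3, r4} : Multiset ℝ) ≤ 1 :=
        Multiset.nodup_iff_count_le_one.1 hnodup x
      have h2 : 1 ≤ Multiset.count x Q.roots :=
        Multiset.one_le_count_iff_mem.2 (hmem x hx)
      omega
    · rw [Multiset.count_eq_zero_of_notMem hx]
      omega
  have hcard : Multiset.card Q.roots ≤ Multiset.card ({r1, r2, r3, r4} : Multiset ℝ) := by
    have := Polynomial.card_roots' Q
    rw [hdeg] at this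
    simpa using this
  exact (Multiset.eq_of_le_of_card_le hle hcard).symm


lemma SHaux_dpv (R θ c1 c2 : ℝ) (v : ℝ) (hv : v ≠ 0) :
    deriv (fun v' => R * θ / v' - c1 - c2) v = -(R*θ)/v^2 := by
  have hfun : (fun v' : ℝ => R * θ / v' - c1 - c2)
      = fun v' : ℝ => (R * θ) * v'⁻¹ - c1 - c2 := by
    funext t; ring
  have h : HasDerivAt (fun v' : ℝ => (R * θ) * v'⁻¹ - c1 - c2)
      ((R*θ) * (-(v^2)⁻¹)) v :=
    (((hasDerivAt_inv hv).const_mul (R*θ)).sub_const c1).sub_const c2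
  rw [hfun, h.deriv]; ring

lemma SHaux_dpθ (R τ1 κ c2 v q : ℝ) (θ : ℝ) (hθ : θ ≠ 0) :
    deriv (fun θ' => R * θ' / v - τ1 * q ^ 2 / (2 * κ * θ') - c2) θ
      = R/v + τ1*q^2/(2*κ*θ^2) := by
  have hfun : (fun θ' : ℝ => R * θ' / v - τ1 * q ^ 2 / (2 * κ * θ') - c2)
      = fun θ' : ℝ => R * θ' / v - (τ1 * q ^ 2 / (2 * κ)) * θ'⁻¹ - c2 := by
    funext t; ring
  have h1 : HasDerivAt (fun θ' : ℝ => R * θ' / v) (R * 1 / v) θ :=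
    ((hasDerivAt_id θ).const_mul R).div_const v
  have h2 : HasDerivAt (fun θ' : ℝ => (τ1 * q ^ 2 / (2 * κ)) * θ'⁻¹)
      ((τ1 * q ^ 2 / (2 * κ)) * (-(θ^2)⁻¹)) θ :=
    (hasDerivAt_inv hθ).const_mul _
  have h : HasDerivAt (fun θ' : ℝ => R * θ' / v - (τ1 * q ^ 2 / (2 * κ)) * θ'⁻¹ - c2)
      (R * 1 / v - (τ1 * q ^ 2 / (2 * κ)) * (-(θ^2)⁻¹)) θ := (h1.sub h2).sub_const c2
  rw [hfun, h.deriv]; field_simp; ring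

lemma SHaux_dpq (τ1 κ θ c1 c2 : ℝ) (q : ℝ) :
    deriv (fun q' => c1 - τ1 * q' ^ 2 / (2 * κ * θ) - c2) q = -(τ1*q)/(κ*θ) := by
  have h2 : HasDerivAt (fun q' : ℝ => q' ^ 2) (2*q) q := by
    simpa using hasDerivAt_pow 2 q
  have h : HasDerivAt (fun q' : ℝ => c1 - τ1 * q' ^ 2 / (2 * κ * θ) - c2)
      (-(τ1 * (2*q) / (2 * κ * θ))) q :=
    (((h2.const_mul τ1).div_const (2*κ*θ)).const_sub c1).sub_const c2
  rw [h.deriv]; ring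

lemma SHaux_dpS (τ2 μ c1 c2 : ℝ) (S : ℝ) :
    deriv (fun S' => c1 - c2 - τ2 * S' ^ 2 / (2 * μ)) S = -(τ2*S)/μ := by
  have h2 : HasDerivAt (fun S' : ℝ => S' ^ 2) (2*S) S := by
    simpa using hasDerivAt_pow 2 S
  have h : HasDerivAt (fun S' : ℝ => c1 - c2 - τ2 * S' ^ 2 / (2 * μ))
      (-(τ2 * (2*S) / (2 * μ))) S :=
    ((h2.const_mul τ2).div_const (2*μ)).const_sub (c1 - c2)
  rw [h.deriv]; ring

lemma SHaux_deθ (Cv τ1 κ v q c2 : ℝ) (θ : ℝ) (hθ : θ ≠ 0) :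
    deriv (fun θ' => Cv * θ' + τ1 * v * q ^ 2 / (κ * θ') + c2) θ
      = Cv - τ1*v*q^2/(κ*θ^2) := by
  have hfun : (fun θ' : ℝ => Cv * θ' + τ1 * v * q ^ 2 / (κ * θ') + c2)
      = fun θ' : ℝ => Cv * θ' + (τ1 * v * q ^ 2 / κ) * θ'⁻¹ + c2 := by
    funext t; ring
  have h1 : HasDerivAt (fun θ' : ℝ => Cv * θ') (Cv * 1) θ :=
    (hasDerivAt_id θ).const_mul Cv
  have h2 : HasDerivAt (fun θ' : ℝ => (τ1 * v * q ^ 2 / κ) * θ'⁻¹)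
      ((τ1 * v * q ^ 2 / κ) * (-(θ^2)⁻¹)) θ := (hasDerivAt_inv hθ).const_mul _
  have h : HasDerivAt (fun θ' : ℝ => Cv * θ' + (τ1 * v * q ^ 2 / κ) * θ'⁻¹ + c2)
      (Cv * 1 + (τ1 * v * q ^ 2 / κ) * (-(θ^2)⁻¹)) θ := (h1.add h2).add_const c2
  rw [hfun, h.deriv]; field_simp; ring


noncomputable section

def SHpv (R : ℝ) (x : ℝ×ℝ×ℝ×ℝ) : ℝ := -(R*x.2.1)/x.1^2
def SHpθ (R τ1 κ : ℝ) (x : ℝ×ℝ×ℝ×ℝ) : ℝ := R/x.1 + τ1*x.2.2.1^2/(2*κ*x.2.1^2)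
def SHpq (τ1 κ : ℝ) (x : ℝ×ℝ×ℝ×ℝ) : ℝ := -(τ1*x.2.2.1)/(κ*x.2.1)
def SHpS (τ2 μ : ℝ) (x : ℝ×ℝ×ℝ×ℝ) : ℝ := -(τ2*x.2.2.2)/μ
def SHeθ (Cv τ1 κ : ℝ) (x : ℝ×ℝ×ℝ×ℝ) : ℝ := Cv - τ1*x.1*x.2.2.1^2/(κ*x.2.1^2)
def SHc0sq (R τ2 μ : ℝ) (x : ℝ×ℝ×ℝ×ℝ) : ℝ := μ*(1 - SHpS τ2 μ x)/(τ2*x.1) - SHpv R x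
def SHc0 (R τ2 μ : ℝ) (x : ℝ×ℝ×ℝ×ℝ) : ℝ := Real.sqrt (SHc0sq R τ2 μ x)
def SHb (Cv τ1 κ : ℝ) (x : ℝ×ℝ×ℝ×ℝ) : ℝ := -(2*x.2.2.1)/(x.2.1 * SHeθ Cv τ1 κ x)
def SHa2 (R Cv τ1 τ2 κ μ : ℝ) (x : ℝ×ℝ×ℝ×ℝ) : ℝ :=
  (SHpS τ2 μ x - 1) * (μ / (τ2 * x.1)) + SHpv R x - 1 / SHeθ Cv τ1 κ x * (κ / (τ1 * x.1))
    - x.2.1 * SHpθ R τ1 κ x / SHeθ Cv τ1 κ x * SHpθ R τ1 κ x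
def SHa1 (R Cv τ1 τ2 κ μ : ℝ) (x : ℝ×ℝ×ℝ×ℝ) : ℝ :=
  -(x.2.1 * SHpθ R τ1 κ x / SHeθ Cv τ1 κ x * (κ / (τ1 * x.1)) * SHpq τ1 κ x)
    - SHb Cv τ1 κ x * ((SHpS τ2 μ x - 1) * (μ / (τ2 * x.1)) + SHpv R x)
def SHa0 (R Cv τ1 τ2 κ μ : ℝ) (x : ℝ×ℝ×ℝ×ℝ) : ℝ :=
  -(1 / SHeθ Cv τ1 κ x * (κ / (τ1 * x.1)) * ((SHpS τ2 μ x - 1) * (μ / (τ2 * x.1)) + SHpv R x))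
def SHf (R Cv τ1 τ2 κ μ : ℝ) (x : ℝ×ℝ×ℝ×ℝ) (t : ℝ) : ℝ :=
  t^4 - SHb Cv τ1 κ x * t^3 + SHa2 R Cv τ1 τ2 κ μ x * t^2
    + SHa1 R Cv τ1 τ2 κ μ x * t + SHa0 R Cv τ1 τ2 κ μ x

end

section Values
variable (R Cv τ1 τ2 κ μ : ℝ) (hR : 0 < R) (hCv : 0 < Cv) (hτ1 : 0 < τ1) (hτ2 : 0 < τ2)
  (hκ : 0 < κ) (hμ : 0 < μ)

include hR hCv hτ1 hτ2 hκ hμ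

lemma SHval_c0sq : SHc0sq R τ2 μ (1,1,0,0) = μ/τ2 + R := by
  simp only [SHc0sq, SHpS, SHpv]
  norm_num

lemma SHval_c0sq_pos : 0 < SHc0sq R τ2 μ (1,1,0,0) := by
  rw [SHval_c0sq R Cv τ1 τ2 κ μ hR hCv hτ1 hτ2 hκ hμ]; positivity

lemma SHval_b : SHb Cv τ1 κ (1,1,0,0) = 0 := by
  simp only [SHb, SHeθ]; norm_num

lemma SHval_a1 : SHa1 R Cv τ1 τ2 κ μ (1,1,0,0) = 0 := by
  simp only [SHa1, SHb, SHpq, SHpS, SHpv, SHpθ, SHeθ]; norm_num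

lemma SHval_a2 : SHa2 R Cv τ1 τ2 κ μ (1,1,0,0) = -(μ/τ2 + R) - κ/(τ1*Cv) - R^2/Cv := by
  have h1 : Cv ≠ 0 := hCv.ne'
  have h2 : τ1 ≠ 0 := hτ1.ne'
  have h3 : τ2 ≠ 0 := hτ2.ne'
  have h4 : κ ≠ 0 := hκ.ne'
  have h5 : μ ≠ 0 := hμ.ne'
  simp only [SHa2, SHpS, SHpv, SHpθ, SHeθ]
  norm_num
  field_simp
  ring

lemma SHval_a0 : SHa0 R Cv τ1 τ2 κ μ (1,1,0,0) = κ/(τ1*Cv) * (μ/τ2 + R) := by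
  have h1 : Cv ≠ 0 := hCv.ne'
  have h2 : τ1 ≠ 0 := hτ1.ne'
  have h3 : τ2 ≠ 0 := hτ2.ne'
  have h4 : κ ≠ 0 := hκ.ne'
  have h5 : μ ≠ 0 := hμ.ne'
  simp only [SHa0, SHpS, SHpv, SHeθ]
  norm_num
  field_simp
  ring

lemma SHval_a0_pos : 0 < SHa0 R Cv τ1 τ2 κ μ (1,1,0,0) := by
  rw [SHval_a0 R Cv τ1 τ2 κ μ hR hCv hτ1 hτ2 hκ hμ]; positivity

lemma SHval_f_neg (t : ℝ) (ht2 : t^2 = μ/τ2 + R) :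
    SHf R Cv τ1 τ2 κ μ (1,1,0,0) t < 0 := by
  simp only [SHf]
  rw [SHval_b R Cv τ1 τ2 κ μ hR hCv hτ1 hτ2 hκ hμ,
    SHval_a1 R Cv τ1 τ2 κ μ hR hCv hτ1 hτ2 hκ hμ,
    SHval_a2 R Cv τ1 τ2 κ μ hR hCv hτ1 hτ2 hκ hμ,
    SHval_a0 R Cv τ1 τ2 κ μ hR hCv hτ1 hτ2 hκ hμ]
  have e4 : t^4 = (μ/τ2 + R)^2 := by rw [show t^4 = (t^2)^2 by ring, ht2]
  have key : t ^ 4 - 0 * t ^ 3 + (-(μ/τ2 + R) - κ/(τ1*Cv) - R^2/Cv) * t ^ 2 + 0 * t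
      + κ/(τ1*Cv) * (μ/τ2 + R) = -(R^2/Cv * (μ/τ2 + R)) := by
    rw [e4, ht2]; ring
  rw [key]
  have : 0 < R^2/Cv * (μ/τ2 + R) := by positivity
  linarith

lemma SHval_fc0_neg : SHf R Cv τ1 τ2 κ μ (1,1,0,0) (SHc0 R τ2 μ (1,1,0,0)) < 0 := by
  refine SHval_f_neg R Cv τ1 τ2 κ μ hR hCv hτ1 hτ2 hκ hμ _ ?_
  rw [SHc0, SHval_c0sq R Cv τ1 τ2 κ μ hR hCv hτ1 hτ2 hκ hμ]
  exact Real.sq_sqrt (by positivity)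

lemma SHval_fnegc0_neg : SHf R Cv τ1 τ2 κ μ (1,1,0,0) (-SHc0 R τ2 μ (1,1,0,0)) < 0 := by
  refine SHval_f_neg R Cv τ1 τ2 κ μ hR hCv hτ1 hτ2 hκ hμ _ ?_
  rw [neg_pow, SHc0, SHval_c0sq R Cv τ1 τ2 κ μ hR hCv hτ1 hτ2 hκ hμ]
  simpa using Real.sq_sqrt (show (0:ℝ) ≤ μ/τ2 + R by positivity)

end Values

set_option maxHeartbeats 1000000 in
open Polynomial in
lemma charpoly_A (x y z w a b c d m : ℝ) :
    (!![0,-1,0,0,0; x,0,y,z,w; 0,a,b,c,0; 0,0,d,0,0; 0,-m,0,0,0] :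
      Matrix (Fin 5) (Fin 5) ℝ).charpoly
    = X * (X^4 - C b * X^3 + C (w*m + x - c*d - a*y) * X^2
        + C (-(a*d*z) - b*(w*m+x)) * X + C (-(c*d*(w*m+x)))) := by
  have h1 : Matrix.charmatrix (!![0,-1,0,0,0; x,0,y,z,w; 0,a,b,c,0; 0,0,d,0,0;
        0,-m,0,0,0] : Matrix (Fin 5) (Fin 5) ℝ)
      = !![(X:ℝ[X]), 1, 0,0,0; -C x, X, -C y, -C z, -C w; 0, -C a, X - C b, -C c, 0;
          0,0,-C d, X, 0; 0, C m, 0,0,X] := by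
    ext i j
    fin_cases i <;> fin_cases j <;>
      simp [Matrix.charmatrix_apply, Matrix.vecHead, Matrix.vecTail]
  rw [Matrix.charpoly, h1]
  simp [Matrix.det_succ_row_zero, Fin.sum_univ_succ, Fin.succAbove,
    show (Fin.castSucc 2 : Fin 4) = 2 from rfl]
  ring


set_option maxHeartbeats 1000000 in
/-- strict hyperbolicity near equilibrium: for data close enough to the
equilibrium state (1,1,0,0), the coefficient matrix A(v,θ,q,S) has five distinct real
eigenvalues λ1 < λ2 < λ3 = 0 < λ4 < λ5 interlaced with ±c₀. -/
theorem strict_hyperbolicity_near_equilibrium (R Cv τ1 τ2 κ μ : ℝ)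
    (hR : 0 < R) (hCv : 0 < Cv) (hτ1 : 0 < τ1) (hτ2 : 0 < τ2) (hκ : 0 < κ) (hμ : 0 < μ) :
    ∃ δ > 0, ∀ v θ q S : ℝ,
      |v - 1| + |θ - 1| + |q| + |S| ≤ δ →
      let p : ℝ → ℝ → ℝ → ℝ → ℝ := fun v' θ' q' S' =>
        R * θ' / v' - τ1 * q' ^ 2 / (2 * κ * θ') - τ2 * S' ^ 2 / (2 * μ)
      let e : ℝ → ℝ → ℝ → ℝ → ℝ := fun v' θ' q' S' =>
        Cv * θ' + τ1 * v' * q' ^ 2 / (κ * θ') + τ2 * v' * S' ^ 2 / (2 * μ)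
      let pv : ℝ := deriv (fun v' => p v' θ q S) v
      let pθ : ℝ := deriv (fun θ' => p v θ' q S) θ
      let pq : ℝ := deriv (fun q' => p v θ q' S) q
      let pS : ℝ := deriv (fun S' => p v θ q S') S
      let eθ : ℝ := deriv (fun θ' => e v θ' q S) θ
      let A : Matrix (Fin 5) (Fin 5) ℝ :=
        !![0, -1, 0, 0, 0;
           pv, 0, pθ, pq, pS - 1;
           0, θ * pθ / eθ, -(2 * q) / (θ * eθ), 1 / eθ, 0;
           0, 0, κ / (τ1 * v), 0, 0;
           0, -μ / (τ2 * v), 0, 0, 0]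
      let c0 : ℝ := Real.sqrt (μ * (1 - pS) / (τ2 * v) - pv)
      ∃ l1 l2 l4 l5 : ℝ,
        l1 < -c0 ∧ -c0 < l2 ∧ l2 < 0 ∧ 0 < l4 ∧ l4 < c0 ∧ c0 < l5 ∧
        A.charpoly.roots = ({l1, l2, 0, l4, l5} : Multiset ℝ) := by
  classical
  -- continuity of the relevant quantities at the equilibrium point
  have hc1 : ContinuousAt (fun y : ℝ×ℝ×ℝ×ℝ => SHc0sq R τ2 μ y) (1,1,0,0) := by
    simp only [SHc0sq, SHpS, SHpv]
    fun_prop (disch := (norm_num <;> (repeat' apply And.intro) <;> positivity))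
  have hc2 : ContinuousAt (fun y : ℝ×ℝ×ℝ×ℝ => SHa0 R Cv τ1 τ2 κ μ y) (1,1,0,0) := by
    simp only [SHa0, SHpS, SHpv, SHeθ]
    fun_prop (disch := (norm_num <;> (repeat' apply And.intro) <;> positivity))
  have hc3 : ContinuousAt
      (fun y : ℝ×ℝ×ℝ×ℝ => SHf R Cv τ1 τ2 κ μ y (SHc0 R τ2 μ y)) (1,1,0,0) := by
    simp only [SHf, SHb, SHa2, SHa1, SHa0, SHpv, SHpθ, SHpq, SHpS, SHeθ, SHc0, SHc0sq]
    fun_prop (disch := (norm_num <;> (repeat' apply And.intro) <;> positivity))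
  have hc4 : ContinuousAt
      (fun y : ℝ×ℝ×ℝ×ℝ => SHf R Cv τ1 τ2 κ μ y (-SHc0 R τ2 μ y)) (1,1,0,0) := by
    simp only [SHf, SHb, SHa2, SHa1, SHa0, SHpv, SHpθ, SHpq, SHpS, SHeθ, SHc0, SHc0sq]
    fun_prop (disch := (norm_num <;> (repeat' apply And.intro) <;> positivity))
  have hev : ∀ᶠ y : ℝ×ℝ×ℝ×ℝ in nhds (1,1,0,0),
      0 < SHc0sq R τ2 μ y ∧ 0 < SHa0 R Cv τ1 τ2 κ μ y ∧
      SHf R Cv τ1 τ2 κ μ y (SHc0 R τ2 μ y) < 0 ∧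
      SHf R Cv τ1 τ2 κ μ y (-SHc0 R τ2 μ y) < 0 := by
    have e1 := hc1.eventually
      (eventually_gt_nhds (SHval_c0sq_pos R Cv τ1 τ2 κ μ hR hCv hτ1 hτ2 hκ hμ))
    have e2 := hc2.eventually
      (eventually_gt_nhds (SHval_a0_pos R Cv τ1 τ2 κ μ hR hCv hτ1 hτ2 hκ hμ))
    have e3 := hc3.eventually
      (eventually_lt_nhds (SHval_fc0_neg R Cv τ1 τ2 κ μ hR hCv hτ1 hτ2 hκ hμ))
    have e4 := hc4.eventually
      (eventually_lt_nhds (SHval_fnegc0_neg R Cv τ1 τ2 κ μ hR hCv hτ1 hτ2 hκ hμ))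
    exact e1.and (e2.and (e3.and e4))
  obtain ⟨ε, hε, hball⟩ := Metric.eventually_nhds_iff.1 hev
  refine ⟨min (ε/2) (1/2), by positivity, ?_⟩
  intro v θ q S hsum
  intro p e pv pθ pq pS eθ A c0
  have habs1 : |v - 1| ≤ min (ε/2) (1/2) := by
    have := abs_nonneg (θ-1); have := abs_nonneg q; have := abs_nonneg S; linarith
  have habs2 : |θ - 1| ≤ min (ε/2) (1/2) := by
    have := abs_nonneg (v-1); have := abs_nonneg q; have := abs_nonneg S; linarith
  have habs3 : |q| ≤ min (ε/2) (1/2) := by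
    have := abs_nonneg (v-1); have := abs_nonneg (θ-1); have := abs_nonneg S; linarith
  have habs4 : |S| ≤ min (ε/2) (1/2) := by
    have := abs_nonneg (v-1); have := abs_nonneg (θ-1); have := abs_nonneg q; linarith
  have hmin2 : min (ε/2) (1/2) ≤ 1/2 := min_le_right _ _
  have hvpos : (0:ℝ) < v := by
    have := (abs_le.1 (habs1.trans hmin2)).1; linarith
  have hθpos : (0:ℝ) < θ := by
    have := (abs_le.1 (habs2.trans hmin2)).1; linarith
  have hdist : dist ((v,θ,q,S) : ℝ×ℝ×ℝ×ℝ) ((1,1,0,0) : ℝ×ℝ×ℝ×ℝ) < ε := by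
    have hlt : min (ε/2) (1/2) < ε := lt_of_le_of_lt (min_le_left _ _) (by linarith)
    have hd : dist ((v,θ,q,S) : ℝ×ℝ×ℝ×ℝ) ((1,1,0,0) : ℝ×ℝ×ℝ×ℝ)
        = max |v-1| (max |θ-1| (max |q| |S|)) := by
      simp [Prod.dist_eq, Real.dist_eq, sub_zero, Prod.norm_def, Real.norm_eq_abs]
    rw [hd]
    exact max_lt (lt_of_le_of_lt habs1 hlt) (max_lt (lt_of_le_of_lt habs2 hlt)
      (max_lt (lt_of_le_of_lt habs3 hlt) (lt_of_le_of_lt habs4 hlt)))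
  obtain ⟨hx1, hx2, hx3, hx4⟩ := hball hdist
  -- closed forms for the derivatives
  have hpv' : pv = SHpv R (v,θ,q,S) := by
    show deriv (fun v' => R * θ / v' - τ1 * q ^ 2 / (2 * κ * θ) - τ2 * S ^ 2 / (2 * μ)) v = _
    rw [SHaux_dpv R θ _ _ v hvpos.ne']; rfl
  have hpθ' : pθ = SHpθ R τ1 κ (v,θ,q,S) := by
    show deriv (fun θ' => R * θ' / v - τ1 * q ^ 2 / (2 * κ * θ') - τ2 * S ^ 2 / (2 * μ)) θ = _
    rw [SHaux_dpθ R τ1 κ _ v q θ hθpos.ne']; rfl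
  have hpq' : pq = SHpq τ1 κ (v,θ,q,S) := by
    show deriv (fun q' => R * θ / v - τ1 * q' ^ 2 / (2 * κ * θ) - τ2 * S ^ 2 / (2 * μ)) q = _
    rw [SHaux_dpq τ1 κ θ _ _ q]; rfl
  have hpS' : pS = SHpS τ2 μ (v,θ,q,S) := by
    show deriv (fun S' => R * θ / v - τ1 * q ^ 2 / (2 * κ * θ) - τ2 * S' ^ 2 / (2 * μ)) S = _
    rw [SHaux_dpS τ2 μ _ _ S]; rfl
  have heθ' : eθ = SHeθ Cv τ1 κ (v,θ,q,S) := by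
    show deriv (fun θ' => Cv * θ' + τ1 * v * q ^ 2 / (κ * θ') + τ2 * v * S ^ 2 / (2 * μ)) θ = _
    rw [SHaux_deθ Cv τ1 κ v q _ θ hθpos.ne']; rfl
  have hc0e : c0 = Real.sqrt (μ * (1 - pS) / (τ2 * v) - pv) := rfl
  have eA : A = !![0, -1, 0, 0, 0;
           pv, 0, pθ, pq, pS - 1;
           0, θ * pθ / eθ, -(2 * q) / (θ * eθ), 1 / eθ, 0;
           0, 0, κ / (τ1 * v), 0, 0;
           0, -μ / (τ2 * v), 0, 0, 0] := rfl
  rw [eA, hc0e, hpv', hpθ', hpq', hpS', heθ',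
    show Real.sqrt (μ * (1 - SHpS τ2 μ (v,θ,q,S)) / (τ2 * v) - SHpv R (v,θ,q,S))
      = SHc0 R τ2 μ (v,θ,q,S) from rfl,
    show -(2 * q) / (θ * SHeθ Cv τ1 κ (v,θ,q,S)) = SHb Cv τ1 κ (v,θ,q,S) from rfl,
    neg_div (τ2 * v) μ,
    charpoly_A (SHpv R (v,θ,q,S)) (SHpθ R τ1 κ (v,θ,q,S)) (SHpq τ1 κ (v,θ,q,S))
      (SHpS τ2 μ (v,θ,q,S) - 1) (θ * SHpθ R τ1 κ (v,θ,q,S) / SHeθ Cv τ1 κ (v,θ,q,S))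
      (SHb Cv τ1 κ (v,θ,q,S)) (1 / SHeθ Cv τ1 κ (v,θ,q,S)) (κ / (τ1 * v)) (μ / (τ2 * v)),
    show (SHpS τ2 μ (v,θ,q,S) - 1) * (μ / (τ2 * v)) + SHpv R (v,θ,q,S)
        - 1 / SHeθ Cv τ1 κ (v,θ,q,S) * (κ / (τ1 * v))
        - θ * SHpθ R τ1 κ (v,θ,q,S) / SHeθ Cv τ1 κ (v,θ,q,S) * SHpθ R τ1 κ (v,θ,q,S)
      = SHa2 R Cv τ1 τ2 κ μ (v,θ,q,S) from rfl,
    show -(θ * SHpθ R τ1 κ (v,θ,q,S) / SHeθ Cv τ1 κ (v,θ,q,S) * (κ / (τ1 * v))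
          * SHpq τ1 κ (v,θ,q,S))
        - SHb Cv τ1 κ (v,θ,q,S) * ((SHpS τ2 μ (v,θ,q,S) - 1) * (μ / (τ2 * v))
          + SHpv R (v,θ,q,S))
      = SHa1 R Cv τ1 τ2 κ μ (v,θ,q,S) from rfl,
    show -(1 / SHeθ Cv τ1 κ (v,θ,q,S) * (κ / (τ1 * v)) * ((SHpS τ2 μ (v,θ,q,S) - 1)
          * (μ / (τ2 * v)) + SHpv R (v,θ,q,S)))
      = SHa0 R Cv τ1 τ2 κ μ (v,θ,q,S) from rfl,
    show (Polynomial.X^4 - Polynomial.C (SHb Cv τ1 κ (v,θ,q,S)) * Polynomial.X^3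
        + Polynomial.C (SHa2 R Cv τ1 τ2 κ μ (v,θ,q,S)) * Polynomial.X^2
        + Polynomial.C (SHa1 R Cv τ1 τ2 κ μ (v,θ,q,S)) * Polynomial.X
        + Polynomial.C (SHa0 R Cv τ1 τ2 κ μ (v,θ,q,S)) : Polynomial ℝ)
      = Polynomial.X^4 + Polynomial.C (-SHb Cv τ1 κ (v,θ,q,S)) * Polynomial.X^3
        + Polynomial.C (SHa2 R Cv τ1 τ2 κ μ (v,θ,q,S)) * Polynomial.X^2
        + Polynomial.C (SHa1 R Cv τ1 τ2 κ μ (v,θ,q,S)) * Polynomial.X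
        + Polynomial.C (SHa0 R Cv τ1 τ2 κ μ (v,θ,q,S)) from by rw [map_neg]; ring]
  -- now find the roots of the quartic by the intermediate value theorem
  have hcpos : 0 < SHc0 R τ2 μ (v,θ,q,S) := Real.sqrt_pos.mpr hx1
  have gcont : Continuous (fun t => SHf R Cv τ1 τ2 κ μ (v,θ,q,S) t) := by
    simp only [SHf]; fun_prop
  have hg0 : 0 < SHf R Cv τ1 τ2 κ μ (v,θ,q,S) 0 := by
    simp only [SHf]; norm_num; exact hx2
  set M : ℝ := 1 + |(-SHb Cv τ1 κ (v,θ,q,S))| + |SHa2 R Cv τ1 τ2 κ μ (v,θ,q,S)|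
      + |SHa1 R Cv τ1 τ2 κ μ (v,θ,q,S)| + |SHa0 R Cv τ1 τ2 κ μ (v,θ,q,S)|
      + SHc0 R τ2 μ (v,θ,q,S) with hM
  have hMpos : 0 < M := by
    rw [hM]
    have := abs_nonneg (-SHb Cv τ1 κ (v,θ,q,S))
    have := abs_nonneg (SHa2 R Cv τ1 τ2 κ μ (v,θ,q,S))
    have := abs_nonneg (SHa1 R Cv τ1 τ2 κ μ (v,θ,q,S))
    have := abs_nonneg (SHa0 R Cv τ1 τ2 κ μ (v,θ,q,S))
    linarith
  have hcM : SHc0 R τ2 μ (v,θ,q,S) < M := by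
    rw [hM]
    have := abs_nonneg (-SHb Cv τ1 κ (v,θ,q,S))
    have := abs_nonneg (SHa2 R Cv τ1 τ2 κ μ (v,θ,q,S))
    have := abs_nonneg (SHa1 R Cv τ1 τ2 κ μ (v,θ,q,S))
    have := abs_nonneg (SHa0 R Cv τ1 τ2 κ μ (v,θ,q,S))
    linarith
  have hgM : 0 < SHf R Cv τ1 τ2 κ μ (v,θ,q,S) M := by
    have h := SHaux_quartic_pos (-SHb Cv τ1 κ (v,θ,q,S)) (SHa2 R Cv τ1 τ2 κ μ (v,θ,q,S))
      (SHa1 R Cv τ1 τ2 κ μ (v,θ,q,S)) (SHa0 R Cv τ1 τ2 κ μ (v,θ,q,S)) M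
      (by rw [abs_of_pos hMpos, hM]; linarith [hcpos])
    simp only [SHf]; linarith
  have hgnegM : 0 < SHf R Cv τ1 τ2 κ μ (v,θ,q,S) (-M) := by
    have h := SHaux_quartic_pos (-SHb Cv τ1 κ (v,θ,q,S)) (SHa2 R Cv τ1 τ2 κ μ (v,θ,q,S))
      (SHa1 R Cv τ1 τ2 κ μ (v,θ,q,S)) (SHa0 R Cv τ1 τ2 κ μ (v,θ,q,S)) (-M)
      (by rw [abs_neg M, abs_of_pos hMpos, hM]; linarith [hcpos])
    simp only [SHf]; linarith
  obtain ⟨l1, hl1a, hl1b, hl1e⟩ := SHaux_root_pn (SHf R Cv τ1 τ2 κ μ (v,θ,q,S)) gcont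
    (show -M < -SHc0 R τ2 μ (v,θ,q,S) from neg_lt_neg hcM) hgnegM hx4
  obtain ⟨l2, hl2a, hl2b, hl2e⟩ := SHaux_root_np (SHf R Cv τ1 τ2 κ μ (v,θ,q,S)) gcont
    (show -SHc0 R τ2 μ (v,θ,q,S) < 0 from neg_lt_zero.mpr hcpos) hx4 hg0
  obtain ⟨l4, hl4a, hl4b, hl4e⟩ := SHaux_root_pn (SHf R Cv τ1 τ2 κ μ (v,θ,q,S)) gcont
    hcpos hg0 hx3
  obtain ⟨l5, hl5a, hl5b, hl5e⟩ := SHaux_root_np (SHf R Cv τ1 τ2 κ μ (v,θ,q,S)) gcont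
    hcM hx3 hgM
  have hQroots := SHaux_quartic_roots (-SHb Cv τ1 κ (v,θ,q,S)) (SHa2 R Cv τ1 τ2 κ μ (v,θ,q,S))
    (SHa1 R Cv τ1 τ2 κ μ (v,θ,q,S)) (SHa0 R Cv τ1 τ2 κ μ (v,θ,q,S)) l1 l2 l4 l5
    (hl1b.trans hl2a) (hl2b.trans hl4a) (hl4b.trans hl5a)
    (by simp only [SHf] at hl1e; linarith) (by simp only [SHf] at hl2e; linarith)
    (by simp only [SHf] at hl4e; linarith) (by simp only [SHf] at hl5e; linarith)
  have hdQ : (Polynomial.X^4 + Polynomial.C (-SHb Cv τ1 κ (v,θ,q,S)) * Polynomial.X^3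
      + Polynomial.C (SHa2 R Cv τ1 τ2 κ μ (v,θ,q,S)) * Polynomial.X^2
      + Polynomial.C (SHa1 R Cv τ1 τ2 κ μ (v,θ,q,S)) * Polynomial.X
      + Polynomial.C (SHa0 R Cv τ1 τ2 κ μ (v,θ,q,S)) : Polynomial ℝ).natDegree = 4 := by
    compute_degree!
  have hQne : (Polynomial.X^4 + Polynomial.C (-SHb Cv τ1 κ (v,θ,q,S)) * Polynomial.X^3
      + Polynomial.C (SHa2 R Cv τ1 τ2 κ μ (v,θ,q,S)) * Polynomial.X^2
      + Polynomial.C (SHa1 R Cv τ1 τ2 κ μ (v,θ,q,S)) * Polynomial.X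
      + Polynomial.C (SHa0 R Cv τ1 τ2 κ μ (v,θ,q,S)) : Polynomial ℝ) ≠ 0 := by
    intro h; rw [h] at hdQ; simp at hdQ
  refine ⟨l1, l2, l4, l5, hl1b, hl2a, hl2b, hl4a, hl4b, hl5a, ?_⟩
  rw [Polynomial.roots_mul (mul_ne_zero Polynomial.X_ne_zero hQne), Polynomial.roots_X,
    hQroots]
  simp only [Multiset.insert_eq_cons, Multiset.singleton_add]
  rw [Multiset.cons_swap 0 l1, Multiset.cons_swap 0 l2]
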